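/- Let B be a finite set of points in the Euclidean plane ℝ² containing three non-collinear points. Then the Weber function W_B : ℝ² → ℝ defined by W_B(p) = ∑_{q ∈ B} ‖p − q‖ is strictly convex on ℝ². -/
import Mathlib

/-- If `x ≠ y` and `x - q` and `y - q` lie on the same ray, then `q` is on the line
through `x` and `y`. -/
lemma line_of_sameRay {E : Type*} [NormedAddCommGroup E] [NormedSpace ℝ E]
    {x y q : E} (hxy : x ≠ y) (h : SameRay ℝ (x - q) (y - q)) :
    ∃ r : ℝ, q = r • (y - x) + x := by
  rcases eq_or_ne (x - q) 0 with h0 | h0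
  · refine ⟨0, ?_⟩
    have : q = x := by rw [← sub_eq_zero]; rw [sub_eq_zero] at h0; rw [h0.symm]; abel
    rw [this, zero_smul, zero_add]
  rcases eq_or_ne (y - q) 0 with h1 | h1
  · refine ⟨1, ?_⟩
    have : q = y := by rw [← sub_eq_zero]; rw [sub_eq_zero] at h1; rw [h1.symm]; abel
    rw [this, one_smul]; abel
  obtain ⟨r, s, hr, hs, hrs⟩ := h.exists_pos h0 h1
  have hsr : s - r ≠ 0 := by
    intro hd
    have : s = r := by linarith [sub_eq_zero.mp hd]
    subst this
    have := smul_right_injective E hs.ne' hrs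
    exact hxy (sub_left_inj.mp this)
  have key : (s - r) • q = s • y - r • x := by
    linear_combination (norm := module) hrs
  have h2 : q = (s - r)⁻¹ • (s • y - r • x) := by
    rw [← key, smul_smul, inv_mul_cancel₀ hsr, one_smul]
  refine ⟨s / (s - r), ?_⟩
  rw [h2]
  set_option linter.unnecessarySeqFocus false in match_scalars <;> field_simp <;> ring

theorem weber_strictConvexOn (B : Finset (EuclideanSpace ℝ (Fin 2)))
    (h : ∃ a ∈ B, ∃ b ∈ B, ∃ c ∈ B,
      ¬ Collinear ℝ ({a, b, c} : Set (EuclideanSpace ℝ (Fin 2)))) :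
    StrictConvexOn ℝ Set.univ (fun p : EuclideanSpace ℝ (Fin 2) => ∑ q ∈ B, ‖p - q‖) := by
  obtain ⟨a, ha, b, hb, c, hc, hcol⟩ := h
  refine ⟨convex_univ, fun x _ y _ hxy s t hs ht hst => ?_⟩
  have hq0 : ∃ q₀ ∈ B, ¬ SameRay ℝ (x - q₀) (y - q₀) := by
    by_contra hall
    push_neg at hall
    apply hcol
    rw [collinear_iff_exists_forall_eq_smul_vadd]
    refine ⟨x, y - x, fun p hp => ?_⟩
    have hpB : p ∈ B := by rcases hp with rfl | rfl | rfl <;> assumption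
    obtain ⟨r, hr⟩ := line_of_sameRay hxy (hall p hpB)
    exact ⟨r, by simpa [vadd_eq_add] using hr⟩
  obtain ⟨q₀, hq₀B, hq₀⟩ := hq0
  have hdecomp : ∀ q : EuclideanSpace ℝ (Fin 2),
      (s • x + t • y) - q = s • (x - q) + t • (y - q) := by
    intro q
    linear_combination (norm := module) hst • q
  have hle : ∀ q ∈ B, ‖(s • x + t • y) - q‖ ≤ s * ‖x - q‖ + t * ‖y - q‖ := by
    intro q _
    rw [hdecomp q]
    calc ‖s • (x - q) + t • (y - q)‖ ≤ ‖s • (x - q)‖ + ‖t • (y - q)‖ := norm_add_le _ _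
      _ = s * ‖x - q‖ + t * ‖y - q‖ := by
          rw [norm_smul, norm_smul, Real.norm_of_nonneg hs.le, Real.norm_of_nonneg ht.le]
  have hlt : ‖(s • x + t • y) - q₀‖ < s * ‖x - q₀‖ + t * ‖y - q₀‖ := by
    rw [hdecomp q₀]
    have hnsr : ¬ SameRay ℝ (s • (x - q₀)) (t • (y - q₀)) := by
      intro hsr
      apply hq₀
      have h1 := hsr.pos_smul_left (inv_pos.2 hs)
      rw [smul_smul, inv_mul_cancel₀ hs.ne', one_smul] at h1
      have h2 := h1.pos_smul_right (inv_pos.2 ht)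
      rwa [smul_smul, inv_mul_cancel₀ ht.ne', one_smul] at h2
    calc ‖s • (x - q₀) + t • (y - q₀)‖ < ‖s • (x - q₀)‖ + ‖t • (y - q₀)‖ :=
          norm_add_lt_of_not_sameRay hnsr
      _ = s * ‖x - q₀‖ + t * ‖y - q₀‖ := by
          rw [norm_smul, norm_smul, Real.norm_of_nonneg hs.le, Real.norm_of_nonneg ht.le]
  calc ∑ q ∈ B, ‖(s • x + t • y) - q‖
      < ∑ q ∈ B, (s * ‖x - q‖ + t * ‖y - q‖) :=
        Finset.sum_lt_sum hle ⟨q₀, hq₀B, hlt⟩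
    _ = s * ∑ q ∈ B, ‖x - q‖ + t * ∑ q ∈ B, ‖y - q‖ := by
        rw [Finset.sum_add_distrib, Finset.mul_sum, Finset.mul_sum]
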